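/- Let G be a finite connected weighted graph and e an edge of G. The integration functional ∫_e ∈ Ω(G)* is zero if and only if e is a bridge, i.e., if and only if the graph G − e obtained by deleting e is disconnected. -/

import Mathlib

/-- A finite weighted (multi)graph with a fixed orientation of the edges:
vertex type `V`, edge type `E`, tail/head maps and a positive length function. -/
structure WGraph where
  V : Type
  E : Type
  [fV : Fintype V]
  [fE : Fintype E]
  [dV : DecidableEq V]
  [dE : DecidableEq E]
  tail : E → V
  head : E → V
  len : E → ℝ
  len_pos : ∀ e, 0 < len e

attribute [instance] WGraph.fV WGraph.fE WGraph.dV WGraph.dE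

namespace WGraph

variable (G : WGraph)

/-- Two vertices are adjacent if some edge joins them (in either direction). -/
def Adj (x y : G.V) : Prop :=
  ∃ e, (G.tail e = x ∧ G.head e = y) ∨ (G.tail e = y ∧ G.head e = x)

/-- A weighted graph is connected if any two vertices are joined by a walk. -/
def Connected : Prop := ∀ x y : G.V, Relation.ReflTransGen G.Adj x y

/-- The differential `d : C_0(G,ℝ) → C_1(G,ℝ)`, `(df)(e) = (f(e⁺) - f(e⁻))/ℓ(e)`. -/
noncomputable def d (f : G.V → ℝ) : G.E → ℝ :=
  fun e => (f (G.head e) - f (G.tail e)) / G.len e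

/-- The adjoint `d* : C_1(G,ℝ) → C_0(G,ℝ)`,
`(d*α)(x) = Σ_{e⁺ = x} α(e) - Σ_{e⁻ = x} α(e)`. -/
def dStar (α : G.E → ℝ) : G.V → ℝ := fun x =>
  (∑ e ∈ Finset.univ.filter fun e => G.head e = x, α e) -
    ∑ e ∈ Finset.univ.filter fun e => G.tail e = x, α e

/-- The inner product `⟨α,β⟩ = Σ_e α(e) β(e) ℓ(e)` on real 1-chains. -/
noncomputable def ip (α β : G.E → ℝ) : ℝ := ∑ e, α e * β e * G.len e

/-- Real 1-cycles: the kernel of `d*`. -/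
def IsCycle (α : G.E → ℝ) : Prop := ∀ x, G.dStar α x = 0

/-- Exact 1-chains: the image of `d`. -/
def IsExact (α : G.E → ℝ) : Prop := ∃ f : G.V → ℝ, α = G.d f

/-- A 1-form `ω = Σ ω_e de` (recorded by its coefficients) is harmonic if at every
vertex the incoming and outgoing coefficients sum to the same value. -/
def Harmonic (ω : G.E → ℝ) : Prop :=
  ∀ x, (∑ e ∈ Finset.univ.filter fun e => G.head e = x, ω e) =
    ∑ e ∈ Finset.univ.filter fun e => G.tail e = x, ω e

/-- Integration of the 1-form `ω` along the 1-chain `α`: `∫_α ω = Σ_e ω_e α(e) ℓ(e)`. -/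
noncomputable def intPair (ω α : G.E → ℝ) : ℝ := ∑ e, ω e * α e * G.len e

/-- `d*` on integral 1-chains. -/
def dStarZ (α : G.E → ℤ) : G.V → ℤ := fun x =>
  (∑ e ∈ Finset.univ.filter fun e => G.head e = x, α e) -
    ∑ e ∈ Finset.univ.filter fun e => G.tail e = x, α e

/-- Integral 1-cycles. -/
def IsCycleZ (α : G.E → ℤ) : Prop := ∀ x, G.dStarZ α x = 0

/-- `α ∈ im(d)_ℤ`: `α` is an integral 1-chain which is the differential of a real
function on the vertices (a function with integer slopes). -/
def IsExactZ (α : G.E → ℤ) : Prop :=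
  ∃ f : G.V → ℝ, ∀ e, (α e : ℝ) = G.d f e

/-- The subgroup `H_1(G,ℤ) ⊕ im(d)_ℤ` of `C_1(G,ℤ)`, i.e. the subgroup generated by
integral cycles together with integral exact chains. -/
def jacRel : AddSubgroup (G.E → ℤ) :=
  AddSubgroup.closure {α | G.IsCycleZ α ∨ G.IsExactZ α}

/-- The Jacobian group of a weighted graph: `J(G) = C_1(G,ℤ)/(H_1(G,ℤ) ⊕ im(d)_ℤ)`. -/
def Jac := (G.E → ℤ) ⧸ G.jacRel

noncomputable instance : AddCommGroup G.Jac :=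
  inferInstanceAs (AddCommGroup ((G.E → ℤ) ⧸ G.jacRel))

/-- Divisors of degree zero. -/
def Div0 : AddSubgroup (G.V → ℤ) where
  carrier := {D | ∑ x, D x = 0}
  add_mem' := by
    intro a b ha hb
    simp only [Set.mem_setOf_eq] at *
    simp [Finset.sum_add_distrib, ha, hb]
  zero_mem' := by simp
  neg_mem' := by
    intro a ha
    simp only [Set.mem_setOf_eq] at *
    simp [ha]

/-- `d*` as a group homomorphism on integral 1-chains. -/
def dStarZHom : (G.E → ℤ) →+ (G.V → ℤ) where
  toFun := G.dStarZ
  map_zero' := by funext x; simp [dStarZ]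
  map_add' := by
    intro a b
    funext x
    simp [dStarZ, Finset.sum_add_distrib]
    ring

/-- The subgroup `im(d)_ℤ` of `C_1(G,ℤ)`. -/
def imdZ : AddSubgroup (G.E → ℤ) where
  carrier := {α | G.IsExactZ α}
  add_mem' := by
    rintro a b ⟨f, hf⟩ ⟨g, hg⟩
    exact ⟨f + g, fun e => by
      simp only [Pi.add_apply, Int.cast_add, hf e, hg e, d]; ring⟩
  zero_mem' := ⟨0, fun e => by simp [d]⟩
  neg_mem' := by
    rintro a ⟨f, hf⟩
    exact ⟨-f, fun e => by
      simp only [Pi.neg_apply, Int.cast_neg, hf e, d]; ring⟩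

/-- Principal divisors: `Prin(G) = d*(im(d)_ℤ)`. -/
def Prin : AddSubgroup (G.V → ℤ) := G.imdZ.map G.dStarZHom

lemma sum_dStarZ (α : G.E → ℤ) : ∑ x, G.dStarZ α x = 0 := by
  simp only [dStarZ, Finset.sum_sub_distrib]
  rw [Finset.sum_fiberwise, Finset.sum_fiberwise]
  simp

/-- The degree-zero Picard group `Pic(G) = Div⁰(G)/Prin(G)`. -/
def PicZ := G.Div0 ⧸ (G.Prin.addSubgroupOf G.Div0)

noncomputable instance : AddCommGroup G.PicZ :=
  inferInstanceAs (AddCommGroup (G.Div0 ⧸ (G.Prin.addSubgroupOf G.Div0)))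

/-- The weighted graph obtained by deleting the edge `e₀`. -/
def delEdge (e₀ : G.E) : WGraph where
  V := G.V
  E := {e : G.E // e ≠ e₀}
  tail := fun e => G.tail e.1
  head := fun e => G.head e.1
  len := fun e => G.len e.1
  len_pos := fun e => G.len_pos e.1

/-- An edge is a bridge if deleting it disconnects the graph. -/
def IsBridge (e₀ : G.E) : Prop := ¬ (G.delEdge e₀).Connected

/-- The weighted graph obtained by deleting a vertex `z` (and all incident edges). -/
def delVertex (z : G.V) : WGraph where
  V := {x : G.V // x ≠ z}
  E := {e : G.E // G.tail e ≠ z ∧ G.head e ≠ z}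
  tail := fun e => ⟨G.tail e.1, e.2.1⟩
  head := fun e => ⟨G.head e.1, e.2.2⟩
  len := fun e => G.len e.1
  len_pos := fun e => G.len_pos e.1

open scoped Classical in
/-- The (discrete) potential kernel: `jKer z y` is the function `f` with `f(z) = 0`
and `Δf = δ_y - δ_z` (when such a function exists; it is unique on a
connected graph). -/
noncomputable def jKer (z y : G.V) : G.V → ℝ :=
  if h : ∃ f : G.V → ℝ, f z = 0 ∧ ∀ w, G.dStar (G.d f) w =
      (if w = y then 1 else 0) - (if w = z then 1 else 0)
  then h.choose else 0

/-- Connectivity using only the edges in `S`. -/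
def ConnectedOn (S : Finset G.E) : Prop :=
  ∀ x y : G.V, Relation.ReflTransGen
    (fun a b => ∃ e ∈ S, (G.tail e = a ∧ G.head e = b) ∨ (G.tail e = b ∧ G.head e = a)) x y

/-- A spanning tree: a spanning connected edge set with `#V - 1` edges. -/
def IsSpanningTree (T : Finset G.E) : Prop :=
  G.ConnectedOn T ∧ T.card + 1 = Fintype.card G.V

/-- The weight `w(T) = Π_{e ∉ T} ℓ(e)` of a spanning tree. -/
noncomputable def wt (T : Finset G.E) : ℝ := ∏ e ∈ Finset.univ \ T, G.len e

open scoped Classical in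
/-- `w(G) = Σ_T w(T)`, summed over all spanning trees. -/
noncomputable def wG : ℝ := ∑ T : Finset G.E, if G.IsSpanningTree T then G.wt T else 0

open scoped Classical in
/-- The Foster coefficient `F(e) = (1/w(G)) Σ_{T : e ∉ T} w(T)`. -/
noncomputable def foster (e : G.E) : ℝ :=
  (1 / G.wG) * ∑ T : Finset G.E, if G.IsSpanningTree T ∧ e ∉ T then G.wt T else 0

open scoped Classical in
/-- The fundamental cycle `α_{T,e}`: the unique 1-cycle supported on `T ∪ {e}` taking
the value `1` on `e`; by convention it is `0` when no such cycle exists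
(e.g. when `e ∈ T`). -/
noncomputable def fundCycle (T : Finset G.E) (e : G.E) : G.E → ℝ :=
  if h : ∃ α : G.E → ℝ, G.IsCycle α ∧ α e = 1 ∧ ∀ f, f ∉ T → f ≠ e → α f = 0
  then h.choose else 0

end WGraph

namespace WGraph

open Finset

lemma dStar_add (G : WGraph) (α β : G.E → ℝ) (x : G.V) :
    G.dStar (α + β) x = G.dStar α x + G.dStar β x := by
  simp [dStar, Finset.sum_add_distrib]; ring

lemma dStar_single (G : WGraph) (f : G.E) (c : ℝ) (x : G.V) :
    G.dStar (fun g => if g = f then c else 0) x =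
      (if x = G.head f then c else 0) - (if x = G.tail f then c else 0) := by
  classical
  simp only [dStar]
  rw [Finset.sum_ite_eq' _ f, Finset.sum_ite_eq' _ f]
  simp only [Finset.mem_filter, Finset.mem_univ, true_and]
  congr 1 <;> exact if_congr eq_comm rfl rfl

lemma chain_of_walk (G : WGraph) (e : G.E) {a b : G.V}
    (h : Relation.ReflTransGen (G.delEdge e).Adj a b) :
    ∃ α : G.E → ℝ, α e = 0 ∧ ∀ x, G.dStar α x =
      (if x = b then 1 else 0) - (if x = a then 1 else 0) := by
  classical
  induction h with
  | refl => exact ⟨0, rfl, fun x => by simp [dStar]⟩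
  | tail _ hstep ih =>
    obtain ⟨α, hαe, hα⟩ := ih
    rename_i c b' _
    obtain ⟨f, hf⟩ := hstep
    rcases hf with ⟨h1, h2⟩ | ⟨h1, h2⟩
    · refine ⟨α + fun g => if g = f.1 then 1 else 0, by simp [hαe, Ne.symm f.2], fun x => ?_⟩
      rw [G.dStar_add, hα, G.dStar_single]
      simp only [delEdge] at h1 h2
      rw [h1, h2]
      rcases eq_or_ne x c with hc | hc <;> rcases eq_or_ne x b' with hb | hb <;>
        rcases eq_or_ne x a with ha | ha <;> subst_eqs <;> simp [*]
    · refine ⟨α + fun g => if g = f.1 then (-1 : ℝ) else 0, by simp [hαe, Ne.symm f.2], fun x => ?_⟩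
      rw [G.dStar_add, hα, G.dStar_single]
      simp only [delEdge] at h1 h2
      rw [h1, h2]
      rcases eq_or_ne x c with hc | hc <;> rcases eq_or_ne x b' with hb | hb <;>
        rcases eq_or_ne x a with ha | ha <;> subst_eqs <;> simp [*]

end WGraph

/-- The integration functional `∫_e ω = ω_e ℓ(e)` on harmonic
1-forms is identically zero if and only if `e` is a bridge (deleting `e`
disconnects `G`). -/
theorem int_edge_zero_iff_bridge (G : WGraph) (hG : G.Connected) (e : G.E) :
    (∀ ω : G.E → ℝ, G.Harmonic ω → ω e * G.len e = 0) ↔ G.IsBridge e := by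
  classical
  constructor
  · -- if all harmonic forms vanish on e, then e is a bridge
    intro h
    by_contra hb
    rw [WGraph.IsBridge, not_not] at hb
    obtain ⟨α, hαe, hα⟩ := G.chain_of_walk e (hb (G.head e) (G.tail e))
    set ω : G.E → ℝ := α + fun g => if g = e then (1 : ℝ) else 0 with hωdef
    have hharm : G.Harmonic ω := by
      intro x
      have h0 : G.dStar ω x = 0 := by
        rw [hωdef, G.dStar_add, hα, G.dStar_single]
        rcases eq_or_ne x (G.tail e) with h1 | h1 <;>
          rcases eq_or_ne x (G.head e) with h2 | h2 <;> subst_eqs <;> simp [*]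
      have := sub_eq_zero.mp h0
      exact this
    have hv := h ω hharm
    have hωe : ω e = 1 := by simp [hωdef, hαe]
    rw [hωe, one_mul] at hv
    exact absurd hv (ne_of_gt (G.len_pos e))
  · -- if e is a bridge, every harmonic form vanishes on e
    intro hb ω hω
    have hsymm : Symmetric (G.delEdge e).Adj := by
      rintro x y ⟨f, hf⟩
      exact ⟨f, hf.symm⟩
    set A : Finset G.V :=
      Finset.univ.filter
        (fun x => Relation.ReflTransGen (G.delEdge e).Adj (G.tail e) x) with hA
    have htailA : G.tail e ∈ A := by
      simp only [hA, Finset.mem_filter, Finset.mem_univ, true_and]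
      exact Relation.ReflTransGen.refl
    have hheadA : G.head e ∉ A := by
      intro hmem
      apply hb
      simp only [hA, Finset.mem_filter, Finset.mem_univ, true_and] at hmem
      intro x y
      have key : ∀ u v : G.V, G.Adj u v → Relation.ReflTransGen (G.delEdge e).Adj u v := by
        rintro u v ⟨f, hf⟩
        by_cases hfe : f = e
        · subst hfe
          rcases hf with ⟨h1, h2⟩ | ⟨h1, h2⟩
          · rw [← h1, ← h2]; exact hmem
          · rw [← h1, ← h2]; exact Relation.ReflTransGen.mono (fun _ _ h => hsymm h) _ _ (Relation.ReflTransGen.swap _ _ hmem)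
        · exact Relation.ReflTransGen.single ⟨⟨f, hfe⟩, hf⟩
      exact Relation.reflTransGen_idem (r := (G.delEdge e).Adj) ▸ (Relation.ReflTransGen.mono key _ _ (hG x y))
    have hclosed : ∀ f : G.E, f ≠ e → (G.head f ∈ A ↔ G.tail f ∈ A) := by
      intro f hf
      have adjstep : (G.delEdge e).Adj (G.tail f) (G.head f) := ⟨⟨f, hf⟩, Or.inl ⟨rfl, rfl⟩⟩
      simp only [hA, Finset.mem_filter, Finset.mem_univ, true_and]
      constructor
      · intro hh; exact hh.trans (Relation.ReflTransGen.single (hsymm adjstep))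
      · intro hh; exact hh.trans (Relation.ReflTransGen.single adjstep)
    have hzero : ∀ x, G.dStar ω x = 0 := fun x => sub_eq_zero_of_eq (hω x)
    have hheadsum : ∀ h' : G.E → G.V,
        (∑ x ∈ A, ∑ f ∈ Finset.univ.filter (fun f => h' f = x), ω f)
          = ∑ f, if h' f ∈ A then ω f else 0 := by
      intro h'
      calc (∑ x ∈ A, ∑ f ∈ Finset.univ.filter (fun f => h' f = x), ω f)
          = ∑ x ∈ A, ∑ f, if h' f = x then ω f else 0 := by
            refine Finset.sum_congr rfl fun x _ => ?_
            rw [Finset.sum_filter]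
        _ = ∑ f, ∑ x ∈ A, if h' f = x then ω f else 0 := Finset.sum_comm
        _ = ∑ f, if h' f ∈ A then ω f else 0 := by
            refine Finset.sum_congr rfl fun f _ => ?_
            rw [Finset.sum_ite_eq]
    have hsum : (∑ x ∈ A, G.dStar ω x) = 0 := Finset.sum_eq_zero fun x _ => hzero x
    have hexp : (∑ x ∈ A, G.dStar ω x)
        = ∑ f, ((if G.head f ∈ A then ω f else 0) - (if G.tail f ∈ A then ω f else 0)) := by
      simp only [WGraph.dStar]
      rw [Finset.sum_sub_distrib, Finset.sum_sub_distrib, hheadsum G.head, hheadsum G.tail]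
    have hfinal : (∑ f, ((if G.head f ∈ A then ω f else 0)
        - (if G.tail f ∈ A then ω f else 0))) = -ω e := by
      rw [Finset.sum_eq_single e]
      · simp [hheadA, htailA]
      · intro f _ hf
        have hiff := hclosed f hf
        by_cases hAf : G.tail f ∈ A
        · simp [hAf, hiff.mpr hAf]
        · have hh : G.head f ∉ A := fun hh => hAf (hiff.mp hh)
          simp [hAf, hh]
      · simp
    have : ω e = 0 := by
      have := hexp ▸ hsum
      rw [hfinal] at this
      linarith
    rw [this, zero_mul]
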